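/- Suppose q : ℝ≥0 → ℝ is differentiable and satisfies q'_t = λ·(1 - q_t)⁺ - θ·(q_t - 1)⁺ with q_0 ≥ 0, where λ, θ > 0. Then (q_t - 1)² ≤ (q_0 - 1)²·exp(-2·min(λ,θ)·t) for all t ≥ 0; in particular q_t → 1 as t → ∞. -/

import Mathlib

open Filter Real

/-- Critically loaded fluid limit: exponential convergence of `(q_t - 1)²` to zero. -/
theorem stmt_4 (lam θ : ℝ) (hlam : 0 < lam) (hθ : 0 < θ)
    (q : ℝ → ℝ) (hq0 : 0 ≤ q 0)
    (hq : ∀ t : ℝ, 0 ≤ t →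
      HasDerivAt q (lam * max (1 - q t) 0 - θ * max (q t - 1) 0) t) :
    (∀ t : ℝ, 0 ≤ t →
      (q t - 1) ^ 2 ≤ (q 0 - 1) ^ 2 * exp (-2 * min lam θ * t)) ∧
    Tendsto q atTop (nhds 1) := by
  set m := min lam θ with hm
  have hmpos : 0 < m := lt_min hlam hθ
  set f : ℝ → ℝ := fun t => (q t - 1) ^ 2 * exp (2 * m * t) with hf
  have hD : ∀ t : ℝ, 0 ≤ t → HasDerivAt f
      ((2 * (q t - 1) * (lam * max (1 - q t) 0 - θ * max (q t - 1) 0)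
        + 2 * m * (q t - 1) ^ 2) * exp (2 * m * t)) t := by
    intro t ht
    have h1 : HasDerivAt (fun t => (q t - 1) ^ 2)
        (2 * (q t - 1) * (lam * max (1 - q t) 0 - θ * max (q t - 1) 0)) t := by
      have := (((hq t ht).sub_const 1).fun_pow 2)
      simpa [mul_comm, mul_assoc, mul_left_comm] using this
    have h2 : HasDerivAt (fun t : ℝ => exp (2 * m * t)) (2 * m * exp (2 * m * t)) t := by
      have := ((hasDerivAt_id t).const_mul (2 * m)).exp
      simpa [mul_comm] using this
    have := h1.fun_mul h2
    convert this using 1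
    all_goals first | rfl | ring
  have hDnonpos : ∀ t : ℝ, 0 ≤ t →
      (2 * (q t - 1) * (lam * max (1 - q t) 0 - θ * max (q t - 1) 0)
        + 2 * m * (q t - 1) ^ 2) * exp (2 * m * t) ≤ 0 := by
    intro t ht
    have hexp : 0 < exp (2 * m * t) := exp_pos _
    rcases le_total (q t) 1 with h | h
    · have h1 : max (1 - q t) 0 = 1 - q t := max_eq_left (by linarith)
      have h2 : max (q t - 1) 0 = 0 := max_eq_right (by linarith)
      have hml : m ≤ lam := min_le_left _ _
      have key : 2 * (q t - 1) * (lam * (1 - q t)) + 2 * m * (q t - 1) ^ 2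
          = 2 * (1 - q t) ^ 2 * (m - lam) := by ring
      rw [h1, h2]
      have : 2 * (q t - 1) * (lam * (1 - q t) - θ * 0) + 2 * m * (q t - 1) ^ 2 ≤ 0 := by
        nlinarith [sq_nonneg (1 - q t)]
      exact mul_nonpos_of_nonpos_of_nonneg this hexp.le
    · have h1 : max (1 - q t) 0 = 0 := max_eq_right (by linarith)
      have h2 : max (q t - 1) 0 = q t - 1 := max_eq_left (by linarith)
      have hmθ : m ≤ θ := min_le_right _ _
      rw [h1, h2]
      have : 2 * (q t - 1) * (lam * 0 - θ * (q t - 1)) + 2 * m * (q t - 1) ^ 2 ≤ 0 := by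
        nlinarith [sq_nonneg (q t - 1)]
      exact mul_nonpos_of_nonpos_of_nonneg this hexp.le
  have hanti : AntitoneOn f (Set.Ici (0 : ℝ)) := by
    apply antitoneOn_of_deriv_nonpos (convex_Ici 0)
    · exact fun t ht => ((hD t ht).continuousAt).continuousWithinAt
    · intro t ht
      rw [interior_Ici] at ht
      exact ((hD t ht.le).differentiableAt).differentiableWithinAt
    · intro t ht
      rw [interior_Ici] at ht
      rw [(hD t ht.le).deriv]
      exact hDnonpos t ht.le
  have hmain : ∀ t : ℝ, 0 ≤ t →
      (q t - 1) ^ 2 ≤ (q 0 - 1) ^ 2 * exp (-2 * m * t) := by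
    intro t ht
    have hle : f t ≤ f 0 := hanti (Set.self_mem_Ici) ht ht
    have hf0 : f 0 = (q 0 - 1) ^ 2 := by simp [hf]
    have hexp : 0 < exp (2 * m * t) := exp_pos _
    have : (q t - 1) ^ 2 * exp (2 * m * t) ≤ (q 0 - 1) ^ 2 := by
      rw [← hf0]; exact hle
    have h2 : (q t - 1) ^ 2 ≤ (q 0 - 1) ^ 2 / exp (2 * m * t) :=
      (le_div_iff₀ hexp).mpr this
    calc (q t - 1) ^ 2 ≤ (q 0 - 1) ^ 2 / exp (2 * m * t) := h2
      _ = (q 0 - 1) ^ 2 * exp (-2 * m * t) := by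
          rw [div_eq_mul_inv, ← exp_neg]; ring_nf
  refine ⟨hmain, ?_⟩
  have hsq : Tendsto (fun t => (q t - 1) ^ 2) atTop (nhds 0) := by
    apply squeeze_zero' (Eventually.mono (eventually_ge_atTop 0) fun t ht => sq_nonneg _)
      (Eventually.mono (eventually_ge_atTop 0) fun t ht => hmain t ht)
    have : Tendsto (fun t : ℝ => exp (-2 * m * t)) atTop (nhds 0) := by
      apply tendsto_exp_atBot.comp
      exact Tendsto.const_mul_atTop_of_neg (by linarith) tendsto_id
    simpa using this.const_mul ((q 0 - 1) ^ 2)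
  have habs : Tendsto (fun t => |q t - 1|) atTop (nhds 0) := by
    have : Tendsto (fun t => Real.sqrt ((q t - 1) ^ 2)) atTop (nhds (Real.sqrt 0)) :=
      (Real.continuous_sqrt.tendsto 0).comp hsq
    simpa [Real.sqrt_sq_eq_abs] using this
  have hsub : Tendsto (fun t => q t - 1) atTop (nhds 0) :=
    (tendsto_zero_iff_abs_tendsto_zero _).mpr habs
  have := hsub.add_const 1
  simpa using this
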